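/- For any prime p and any natural numbers N and ℓ with 1 ≤ ℓ ≤ N+1, the binomial coefficient C(p^N, ℓ) is divisible by p^(N+1-ℓ). -/

import Mathlib

/-- For any prime `p` and naturals `N`, `ℓ` with `1 ≤ ℓ ≤ N+1`, the binomial
coefficient `C(p^N, ℓ)` is divisible by `p^(N+1-ℓ)`. -/
theorem stmt0 (p N ℓ : ℕ) (hp : p.Prime) (h1 : 1 ≤ ℓ) (h2 : ℓ ≤ N + 1) :
    p ^ (N + 1 - ℓ) ∣ (p ^ N).choose ℓ := by
  rcases le_or_gt ℓ (p ^ N) with hle | hlt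
  · set m := multiplicity p ℓ with hm
    have hdvd : p ^ m ∣ ℓ := pow_multiplicity_dvd p ℓ
    have hle' : p ^ m ≤ ℓ := Nat.le_of_dvd (by omega) hdvd
    have hmlt : m < p ^ m := Nat.lt_pow_self (n := m) hp.one_lt
    have hmℓ : m ≤ ℓ - 1 := by omega
    apply pow_dvd_of_le_emultiplicity
    rw [Nat.Prime.emultiplicity_choose_prime_pow hp hle (by omega)]
    exact_mod_cast (by omega : N + 1 - ℓ ≤ N - m)
  · rw [Nat.choose_eq_zero_of_lt hlt]
    exact dvd_zero _
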